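/- Let X be the closed unit ball of a Hilbert space of uncountable orthonormal dimension, equipped with the weak topology. Then X is a compact Hausdorff space (Banach–Alaoglu) and X is not the support of any Radon measure. -/

import Mathlib

open MeasureTheory

noncomputable section

/-- The closed unit ball of a Hilbert space, equipped with the weak topology. -/
def ballWeak (H : Type*) [NormedAddCommGroup H] [InnerProductSpace ℝ H] : Type _ :=
  {v : H // ‖v‖ ≤ 1}

instance (H : Type*) [NormedAddCommGroup H] [InnerProductSpace ℝ H] :
    TopologicalSpace (ballWeak H) :=
  TopologicalSpace.induced (fun v : {v : H // ‖v‖ ≤ 1} => toWeakSpace ℝ H v.1)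
    inferInstance

instance (H : Type*) [NormedAddCommGroup H] [InnerProductSpace ℝ H] :
    MeasurableSpace (ballWeak H) := borel _

/-- The support of a measure. -/
def mSupport {X : Type*} [TopologicalSpace X] [MeasurableSpace X] (m : Measure X) : Set X :=
  {x | ∀ U : Set X, IsOpen U → x ∈ U → 0 < m U}


namespace Stmt19Aux

open InnerProductSpace NormedSpace

variable (H : Type*) [NormedAddCommGroup H] [InnerProductSpace ℝ H] [CompleteSpace H]

/-- The identity map from `H` with the weak topology to the weak-star dual, via `toDual`. -/
def weakHomeo : WeakSpace ℝ H ≃ₜ WeakDual ℝ H where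
  toFun x := toDual ℝ H x
  invFun f := (toDual ℝ H).symm f
  left_inv x := (toDual ℝ H).symm_apply_apply x
  right_inv f := (toDual ℝ H).apply_symm_apply f
  continuous_toFun := by
    apply WeakBilin.continuous_of_continuous_eval
    intro y
    have h : (fun x : WeakSpace ℝ H => (topDualPairing ℝ H) (toDual ℝ H x) y)
        = fun x : WeakSpace ℝ H => (topDualPairing ℝ H).flip x (innerSL ℝ y) := by
      funext x
      simp only [topDualPairing_apply, LinearMap.flip_apply, innerSL_apply_apply, toDual_apply_apply]
      exact real_inner_comm _ _
    rw [h]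
    exact WeakBilin.eval_continuous _ _
  continuous_invFun := by
    apply WeakBilin.continuous_of_continuous_eval
    intro g
    have h : (fun f : WeakDual ℝ H => (topDualPairing ℝ H).flip ((toDual ℝ H).symm f) g)
        = fun f : WeakDual ℝ H => (topDualPairing ℝ H) f ((toDual ℝ H).symm g) := by
      funext f
      simp only [topDualPairing_apply, LinearMap.flip_apply]
      exact (toDual_symm_apply (𝕜 := ℝ) (E := H) (y := g)).symm.trans
        ((real_inner_comm _ _).trans (toDual_symm_apply (𝕜 := ℝ) (E := H) (y := (f : StrongDual ℝ H))))
    rw [h]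
    exact WeakBilin.eval_continuous _ _

end Stmt19Aux

open InnerProductSpace NormedSpace

/-- The closed unit ball `X` of a Hilbert space of uncountable orthonormal dimension,
with the weak topology, is a compact Hausdorff space (Banach–Alaoglu) which is not the
support of any Radon measure (finite Borel measure, inner regular w.r.t. compacts). -/
theorem stmt_19 {H : Type*} [NormedAddCommGroup H] [InnerProductSpace ℝ H]
    [CompleteSpace H] {ι : Type*} (b : HilbertBasis ι ℝ H) (hι : ¬ Countable ι) :
    CompactSpace (ballWeak H) ∧ T2Space (ballWeak H) ∧
      ∀ m : Measure (ballWeak H), IsFiniteMeasure m → m.InnerRegular →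
        mSupport m ≠ Set.univ := by
  classical
  have hBorel : BorelSpace (ballWeak H) := ⟨rfl⟩
  -- the canonical map into the weak space, and its inducing property
  set g : ballWeak H → WeakSpace ℝ H := fun v => toWeakSpace ℝ H v.1 with hg
  have hgind : Topology.IsInducing g := ⟨rfl⟩
  set φ : ballWeak H → WeakDual ℝ H := fun v => Stmt19Aux.weakHomeo H (g v) with hφ
  have hφind : Topology.IsInducing φ := (Stmt19Aux.weakHomeo H).isInducing.comp hgind
  have hφinj : Function.Injective φ := by
    intro v w h
    apply Subtype.ext
    exact (toDual ℝ H).injective h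
  -- the range of φ is the closed unit ball of the dual
  have hrange : Set.range φ = WeakDual.toStrongDual ⁻¹' Metric.closedBall (0 : StrongDual ℝ H) 1 := by
    ext f
    simp only [Set.mem_range, Set.mem_preimage, Metric.mem_closedBall, dist_zero_right]
    constructor
    · rintro ⟨v, rfl⟩
      show ‖(toDual ℝ H) v.1‖ ≤ 1
      rw [LinearIsometryEquiv.norm_map]
      exact v.2
    · intro hf
      refine ⟨⟨(toDual ℝ H).symm f, ?_⟩, ?_⟩
      · exact ((toDual ℝ H).symm.norm_map f).le.trans hf
      · show (toDual ℝ H) ((toDual ℝ H).symm f) = f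
        exact (toDual ℝ H).apply_symm_apply f
  have hcompact : CompactSpace (ballWeak H) := by
    rw [← isCompact_univ_iff, hφind.isCompact_iff, Set.image_univ, hrange]
    exact WeakDual.isCompact_closedBall (0 : StrongDual ℝ H) 1
  have ht2 : T2Space (ballWeak H) :=
    Topology.IsEmbedding.t2Space ⟨hφind, hφinj⟩
  refine ⟨hcompact, ht2, ?_⟩
  intro m hfin _ hsup
  -- the disjoint open sets
  set U : ι → Set (ballWeak H) :=
    fun i => {v : ballWeak H | (4/5 : ℝ) < inner ℝ (b i) v.1} with hU
  have hUopen : ∀ i, IsOpen (U i) := by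
    intro i
    have hcont : Continuous fun x : WeakSpace ℝ H =>
        (topDualPairing ℝ H).flip x (innerSL ℝ (b i)) :=
      WeakBilin.eval_continuous _ _
    have hopen : IsOpen {x : WeakSpace ℝ H | (4/5 : ℝ) < (topDualPairing ℝ H).flip x (innerSL ℝ (b i))} :=
      isOpen_lt continuous_const hcont
    have : U i = g ⁻¹' {x : WeakSpace ℝ H | (4/5 : ℝ) < (topDualPairing ℝ H).flip x (innerSL ℝ (b i))} := rfl
    rw [this]
    exact hopen.preimage continuous_induced_dom
  have hUmem : ∀ (i : ι) (v : ballWeak H), v ∈ U i ↔ (4/5 : ℝ) < inner ℝ (b i) v.1 :=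
    fun i v => Iff.rfl
  have hUdisj : Pairwise (Function.onFun Disjoint U) := by
    intro i j hij
    rw [Function.onFun, Set.disjoint_left]
    intro v hvi hvj
    have hbi : (4/5 : ℝ) < inner ℝ (b i) v.1 := hvi
    have hbj : (4/5 : ℝ) < inner ℝ (b j) v.1 := hvj
    have hbessel := b.orthonormal.sum_inner_products_le (𝕜 := ℝ) (x := v.1) (s := {i, j})
    rw [Finset.sum_pair hij] at hbessel
    have h1 : ‖(inner ℝ (b i) v.1 : ℝ)‖ ^ 2 = (inner ℝ (b i) v.1 : ℝ) ^ 2 := by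
      rw [Real.norm_eq_abs, sq_abs]
    have h2 : ‖(inner ℝ (b j) v.1 : ℝ)‖ ^ 2 = (inner ℝ (b j) v.1 : ℝ) ^ 2 := by
      rw [Real.norm_eq_abs, sq_abs]
    have hv1 : ‖v.1‖ ≤ 1 := v.2
    have hv0 : (0:ℝ) ≤ ‖v.1‖ := norm_nonneg _
    nlinarith [hbessel, h1, h2]
  have hUpos : ∀ i, 0 < m (U i) := by
    intro i
    have hnorm : ‖b i‖ = 1 := b.orthonormal.1 i
    set pt : ballWeak H := ⟨b i, le_of_eq hnorm⟩ with hpt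
    have hmemU : pt ∈ U i := by
      show (4/5 : ℝ) < inner ℝ (b i) (b i)
      rw [real_inner_self_eq_norm_sq, hnorm]
      norm_num
    have hptmem : pt ∈ mSupport m := by rw [hsup]; trivial
    exact hptmem (U i) (hUopen i) hmemU
  have hmble : ∀ i, MeasurableSet (U i) := fun i => (hUopen i).measurableSet
  have hcnt : Set.Countable {i : ι | 0 < m (U i)} :=
    MeasureTheory.Measure.countable_meas_pos_of_disjoint_iUnion hmble hUdisj
  have huniv : (Set.univ : Set ι).Countable :=
    hcnt.mono (fun i _ => hUpos i)
  exact hι (Set.countable_univ_iff.mp huniv)
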